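/- arXiv:1503.00998 — 5 statements merged into one kernel-verified Lean document; each statement's English description precedes it below -/
import Mathlib

section
/- If G is an r-regular graph on n vertices and q ≥ r+1, then the number of rainbow q-colorings of the closed neighborhood hypergraph 𝓝_c(G) is at most (q(q-1)⋯(q-r))^(n/(r+1)). -/
open Finset

/-- Generalized Hölder inequality with equal exponents `1/k`, `k = K.card`. -/
lemma my_holder {ι γ : Type*} (K : Finset ι) (B : Finset γ) (k : ℕ) (hk : K.card = k)
    (hk1 : 1 ≤ k) (p : ι → γ → ℝ) (hp : ∀ i b, 0 ≤ p i b) :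
    ∑ b ∈ B, ∏ i ∈ K, (p i b) ^ (1/k : ℝ) ≤ ∏ i ∈ K, (∑ b ∈ B, p i b) ^ (1/k : ℝ) := by
  have hkpos : (0:ℝ) < k := by positivity
  have hexp : (0:ℝ) < 1/k := by positivity
  by_cases hA : ∃ i ∈ K, ∑ b ∈ B, p i b = 0
  · obtain ⟨i, hiK, hi0⟩ := hA
    have hzero : ∀ b ∈ B, p i b = 0 := by
      intro b hb
      have := (Finset.sum_eq_zero_iff_of_nonneg (fun b _ => hp i b)).mp hi0
      exact this b hb
    have hL : ∑ b ∈ B, ∏ j ∈ K, (p j b) ^ (1/k : ℝ) = 0 := by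
      apply Finset.sum_eq_zero
      intro b hb
      apply Finset.prod_eq_zero hiK
      rw [hzero b hb, Real.zero_rpow (ne_of_gt hexp)]
    have hR : ∏ j ∈ K, (∑ b ∈ B, p j b) ^ (1/k : ℝ) = 0 := by
      apply Finset.prod_eq_zero hiK
      rw [hi0, Real.zero_rpow (ne_of_gt hexp)]
    rw [hL, hR]
  · push_neg at hA
    set A : ι → ℝ := fun i => ∑ b ∈ B, p i b with hAdef
    have hApos : ∀ i ∈ K, 0 < A i := fun i hi =>
      lt_of_le_of_ne (Finset.sum_nonneg fun b _ => hp i b) (Ne.symm (hA i hi))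
    have key : ∑ b ∈ B, ∏ i ∈ K, (p i b / A i) ^ (1/k : ℝ) ≤ 1 := by
      have step : ∀ b ∈ B, ∏ i ∈ K, (p i b / A i) ^ (1/k : ℝ) ≤
          ∑ i ∈ K, (1/k : ℝ) * (p i b / A i) := by
        intro b _
        exact Real.geom_mean_le_arith_mean_weighted K (fun _ => 1/k) (fun i => p i b / A i)
          (fun i _ => le_of_lt hexp)
          (by rw [Finset.sum_const, hk, nsmul_eq_mul]; field_simp)
          (fun i hi => div_nonneg (hp i b) (hApos i hi).le)
      calc ∑ b ∈ B, ∏ i ∈ K, (p i b / A i) ^ (1/k : ℝ)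
          ≤ ∑ b ∈ B, ∑ i ∈ K, (1/k : ℝ) * (p i b / A i) :=
            Finset.sum_le_sum step
        _ = ∑ i ∈ K, (1/k : ℝ) * ((∑ b ∈ B, p i b) / A i) := by
            rw [Finset.sum_comm]
            exact Finset.sum_congr rfl fun i _ => by rw [← Finset.mul_sum, ← Finset.sum_div]
        _ = ∑ i ∈ K, (1/k : ℝ) := Finset.sum_congr rfl fun i hi => by
            rw [div_self (ne_of_gt (hApos i hi)), mul_one]
        _ = 1 := by rw [Finset.sum_const, hk, nsmul_eq_mul]; field_simp
    have expand : ∀ b ∈ B, ∏ i ∈ K, (p i b / A i) ^ (1/k : ℝ) =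
        (∏ i ∈ K, (p i b) ^ (1/k : ℝ)) / ∏ i ∈ K, (A i) ^ (1/k : ℝ) := by
      intro b _
      rw [← Finset.prod_div_distrib]
      exact Finset.prod_congr rfl fun i hi =>
        Real.div_rpow (hp i b) (hApos i hi).le _
    have hprodpos : 0 < ∏ i ∈ K, (A i) ^ (1/k : ℝ) :=
      Finset.prod_pos fun i hi => Real.rpow_pos_of_pos (hApos i hi) _
    rw [Finset.sum_congr rfl expand, ← Finset.sum_div, div_le_one hprodpos] at key
    simpa using key

open Finset

section Proj

variable {α β : Type*} [DecidableEq α] [Fintype α] [DecidableEq β] [Nonempty β]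

/-- Projection of a function onto coordinates in `F`, with a fixed default elsewhere. -/
noncomputable def projFn (F : Finset α) (s : α → β) : α → β :=
  fun a => if a ∈ F then s a else Classical.arbitrary β

/-- Projection of a set of functions onto coordinates in `F`. -/
noncomputable def proj (F : Finset α) (S : Finset (α → β)) : Finset (α → β) :=
  S.image (projFn F)

lemma proj_card_mono (F : Finset α) {S T : Finset (α → β)} (h : T ⊆ S) :
    (proj F T).card ≤ (proj F S).card :=
  Finset.card_le_card (Finset.image_subset_image h)

lemma proj_erase_card_le (F : Finset α) (u : α) (S : Finset (α → β)) :
    (proj (F.erase u) S).card ≤ (proj F S).card := by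
  have : proj (F.erase u) S =
      (proj F S).image (fun t a => if a = u then Classical.arbitrary β else t a) := by
    rw [proj, proj, Finset.image_image]
    apply Finset.image_congr
    intro s _
    funext a
    simp only [Function.comp_apply, projFn, Finset.mem_erase]
    by_cases hau : a = u <;> simp [hau]
  rw [this]
  exact Finset.card_image_le

lemma projFn_mem_of_notMem (F : Finset α) (s : α → β) {a : α} (ha : a ∉ F) :
    projFn F s a = Classical.arbitrary β := by simp [projFn, ha]

lemma projFn_mem_of_mem (F : Finset α) (s : α → β) {a : α} (ha : a ∈ F) :
    projFn F s a = s a := by simp [projFn, ha]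

/-- Shearer's inequality (counting version). -/
lemma shearer [Fintype β] {ι : Type*} (k : ℕ) (hk1 : 1 ≤ k)
    (A : Finset α) (I : Finset ι) (f : ι → Finset α) (S : Finset (α → β))
    (hdet : ∀ s ∈ S, ∀ t ∈ S, (∀ a ∈ A, s a = t a) → s = t)
    (hcov : ∀ a ∈ A, k ≤ (I.filter (fun i => a ∈ f i)).card) :
    (S.card : ℝ) ≤ ∏ i ∈ I, ((proj (f i) S).card : ℝ) ^ (1/k : ℝ) := by
  classical
  have hexp : (0:ℝ) ≤ 1/k := by positivity
  induction A using Finset.induction_on generalizing f S with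
  | empty =>
    rcases Finset.eq_empty_or_nonempty S with hS | hS
    · simp only [hS, Finset.card_empty, Nat.cast_zero]
      exact Finset.prod_nonneg fun i _ => Real.rpow_nonneg (Nat.cast_nonneg _) _
    · have hcard : S.card = 1 := by
        rw [Finset.card_eq_one]
        obtain ⟨s, hs⟩ := hS
        exact ⟨s, Finset.eq_singleton_iff_unique_mem.mpr
          ⟨hs, fun t ht => hdet t ht s hs (fun a ha => absurd ha (Finset.notMem_empty a))⟩⟩
      rw [hcard, Nat.cast_one]
      have h1 : ∀ i ∈ I, (1:ℝ) ≤ ((proj (f i) S).card : ℝ) ^ (1/k : ℝ) := by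
        intro i _
        apply Real.one_le_rpow _ hexp
        have : (proj (f i) S).Nonempty := hS.image _
        have := Finset.card_pos.mpr this
        exact_mod_cast this
      calc (1:ℝ) = ∏ _i ∈ I, (1:ℝ) := by simp
        _ ≤ _ := Finset.prod_le_prod (fun i _ => zero_le_one) h1
  | @insert u A' hu ih =>
    set Sb : β → Finset (α → β) := fun b => S.filter (fun s => s u = b) with hSbdef
    -- decomposition of the cardinality
    have hsplit : S.card = ∑ b : β, (Sb b).card :=
      Finset.card_eq_sum_card_fiberwise (fun s _ => Finset.mem_univ (s u))
    -- induction hypothesis for each fiber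
    have hIH : ∀ b : β, ((Sb b).card : ℝ) ≤
        ∏ i ∈ I, ((proj ((f i).erase u) (Sb b)).card : ℝ) ^ (1/k : ℝ) := by
      intro b
      apply ih (fun i => (f i).erase u) (Sb b)
      · intro s hs t ht hag
        apply hdet s (Finset.filter_subset _ _ hs) t (Finset.filter_subset _ _ ht)
        intro a ha
        rcases Finset.mem_insert.mp ha with rfl | ha'
        · rw [(Finset.mem_filter.mp hs).2, (Finset.mem_filter.mp ht).2]
        · exact hag a ha'
      · intro a ha
        have hau : a ≠ u := fun h => hu (h ▸ ha)
        have : (I.filter fun i => a ∈ (f i).erase u) = I.filter fun i => a ∈ f i := by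
          apply Finset.filter_congr
          intro i _
          simp [Finset.mem_erase, hau]
        rw [this]
        exact hcov a (Finset.mem_insert_of_mem ha)
    -- choose k sets containing u
    obtain ⟨K, hKsub, hKcard⟩ :=
      Finset.exists_subset_card_eq (hcov u (Finset.mem_insert_self u A'))
    have hKI : K ⊆ I := hKsub.trans (Finset.filter_subset _ _)
    have hKmem : ∀ i ∈ K, u ∈ f i := fun i hi => (Finset.mem_filter.mp (hKsub hi)).2
    set p : ι → β → ℝ := fun i b => ((proj ((f i).erase u) (Sb b)).card : ℝ) with hpdef
    set P : ι → ℝ := fun i => ((proj (f i) S).card : ℝ) with hPdef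
    have hppos : ∀ i b, 0 ≤ p i b := fun i b => Nat.cast_nonneg _
    have hPpos : ∀ i, 0 ≤ P i := fun i => Nat.cast_nonneg _
    -- p i b ≤ P i
    have hpP : ∀ i b, p i b ≤ P i := by
      intro i b
      have h1 : (proj ((f i).erase u) (Sb b)).card ≤ (proj (f i) (Sb b)).card :=
        proj_erase_card_le _ _ _
      have h2 : (proj (f i) (Sb b)).card ≤ (proj (f i) S).card :=
        proj_card_mono _ (Finset.filter_subset _ _)
      simp only [hpdef, hPdef]
      exact_mod_cast h1.trans h2
    -- for i ∈ K : ∑_b p i b ≤ P i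
    have hsumP : ∀ i ∈ K, ∑ b : β, p i b ≤ P i := by
      intro i hi
      have hfib : ∀ b : β, proj (f i) (Sb b) ⊆ (proj (f i) S).filter (fun t => t u = b) := by
        intro b t ht
        obtain ⟨s, hs, rfl⟩ := Finset.mem_image.mp ht
        refine Finset.mem_filter.mpr ⟨Finset.mem_image_of_mem _ (Finset.filter_subset _ _ hs), ?_⟩
        rw [projFn_mem_of_mem _ _ (hKmem i hi)]
        exact (Finset.mem_filter.mp hs).2
      have h3 : ∑ b : β, (proj (f i) (Sb b)).card ≤
          ∑ b : β, ((proj (f i) S).filter (fun t => t u = b)).card :=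
        Finset.sum_le_sum fun b _ => Finset.card_le_card (hfib b)
      have h4 : ∑ b : β, ((proj (f i) S).filter (fun t => t u = b)).card
          = (proj (f i) S).card :=
        (Finset.card_eq_sum_card_fiberwise (fun t _ => Finset.mem_univ (t u))).symm
      have h5 : ∑ b : β, (proj ((f i).erase u) (Sb b)).card ≤
          ∑ b : β, (proj (f i) (Sb b)).card :=
        Finset.sum_le_sum fun b _ => proj_erase_card_le _ _ _
      have := (h5.trans h3).trans_eq h4
      rw [hpdef, hPdef]
      push_cast
      exact_mod_cast this
    -- main chain
    set C : ℝ := ∏ i ∈ I \ K, (P i) ^ (1/k : ℝ) with hCdef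
    have hC0 : 0 ≤ C := Finset.prod_nonneg fun i _ => Real.rpow_nonneg (hPpos i) _
    calc (S.card : ℝ) = ∑ b : β, ((Sb b).card : ℝ) := by rw [hsplit]; push_cast; ring
      _ ≤ ∑ b : β, ∏ i ∈ I, (p i b) ^ (1/k : ℝ) := Finset.sum_le_sum fun b _ => hIH b
      _ = ∑ b : β, (∏ i ∈ K, (p i b) ^ (1/k : ℝ)) * ∏ i ∈ I \ K, (p i b) ^ (1/k : ℝ) := by
          refine Finset.sum_congr rfl fun b _ => ?_
          rw [← Finset.prod_sdiff hKI, mul_comm]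
      _ ≤ ∑ b : β, (∏ i ∈ K, (p i b) ^ (1/k : ℝ)) * C := by
          refine Finset.sum_le_sum fun b _ => ?_
          apply mul_le_mul_of_nonneg_left _
            (Finset.prod_nonneg fun i _ => Real.rpow_nonneg (hppos i b) _)
          exact Finset.prod_le_prod (fun i _ => Real.rpow_nonneg (hppos i b) _)
            (fun i _ => Real.rpow_le_rpow (hppos i b) (hpP i b) hexp)
      _ = C * ∑ b : β, ∏ i ∈ K, (p i b) ^ (1/k : ℝ) := by
          rw [Finset.mul_sum]; exact Finset.sum_congr rfl fun b _ => mul_comm _ _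
      _ ≤ C * ∏ i ∈ K, (∑ b : β, p i b) ^ (1/k : ℝ) := by
          apply mul_le_mul_of_nonneg_left _ hC0
          exact my_holder K Finset.univ k hKcard hk1 p hppos
      _ ≤ C * ∏ i ∈ K, (P i) ^ (1/k : ℝ) := by
          apply mul_le_mul_of_nonneg_left _ hC0
          exact Finset.prod_le_prod
            (fun i _ => Real.rpow_nonneg (Finset.sum_nonneg fun b _ => hppos i b) _)
            (fun i hi => Real.rpow_le_rpow
              (Finset.sum_nonneg fun b _ => hppos i b) (hsumP i hi) hexp)
      _ = ∏ i ∈ I, (P i) ^ (1/k : ℝ) := by rw [← Finset.prod_sdiff hKI, hCdef]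

end Proj
/-- For an `r`-regular graph `G` on `n` vertices and `q ≥ r+1`, the number of rainbow
`q`-colorings of the closed neighborhood hypergraph of `G` is at most
`(q(q-1)⋯(q-r))^(n/(r+1))`. -/
theorem stmt11 {V : Type*} [Fintype V] (G : SimpleGraph V) [DecidableRel G.Adj]
    (r : ℕ) (hreg : G.IsRegularOfDegree r) (q : ℕ) (hq : r + 1 ≤ q) :
    ({φ : V → Fin q | ∀ v : V, Set.InjOn φ (insert v (G.neighborSet v))}.ncard : ℝ) ≤
      (q.descFactorial (r + 1) : ℝ) ^ ((Fintype.card V : ℝ) / (r + 1)) := by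
  classical
  haveI : Nonempty (Fin q) := ⟨⟨0, by omega⟩⟩
  set k : ℕ := r + 1 with hkdef
  have hk1 : 1 ≤ k := Nat.le_add_left 1 r
  set RS : Set (V → Fin q) := {φ : V → Fin q | ∀ v : V, Set.InjOn φ (insert v (G.neighborSet v))}
    with hRSdef
  have hfin : RS.Finite := Set.toFinite _
  set S : Finset (V → Fin q) := hfin.toFinset with hSdef
  have hncard : RS.ncard = S.card := Set.ncard_eq_toFinset_card RS hfin
  -- the closed neighborhood finsets
  set f : V → Finset V := fun v => insert v (G.neighborFinset v) with hfdef
  have hfcard : ∀ v, (f v).card = k := by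
    intro v
    rw [hfdef]
    rw [Finset.card_insert_of_notMem (by simp [SimpleGraph.mem_neighborFinset])]
    rw [G.card_neighborFinset_eq_degree v, hreg v]
  have hmemf : ∀ a v : V, a ∈ f v ↔ (a = v ∨ G.Adj v a) := by
    intro a v
    simp [hfdef, SimpleGraph.mem_neighborFinset]
  -- coverage
  have hcov : ∀ a ∈ (Finset.univ : Finset V), k ≤
      (Finset.univ.filter (fun v => a ∈ f v)).card := by
    intro a _
    have hsub : f a ⊆ Finset.univ.filter (fun v => a ∈ f v) := by
      intro v hv
      rw [hmemf v a] at hv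
      refine Finset.mem_filter.mpr ⟨Finset.mem_univ v, ?_⟩
      rw [hmemf a v]
      rcases hv with h | h
      · exact Or.inl h.symm
      · exact Or.inr h.symm
    calc k = (f a).card := (hfcard a).symm
      _ ≤ _ := Finset.card_le_card hsub
  -- determination
  have hdet : ∀ s ∈ S, ∀ t ∈ S, (∀ a ∈ (Finset.univ : Finset V), s a = t a) → s = t :=
    fun s _ t _ h => funext fun a => h a (Finset.mem_univ a)
  -- Shearer
  have hshearer := shearer (β := Fin q) k hk1 Finset.univ Finset.univ f S hdet hcov
  -- bound each projection
  have hproj : ∀ v : V, (proj (f v) S).card ≤ q.descFactorial k := by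
    intro v
    have hinj : Set.InjOn (fun t : V → Fin q => (fun x : ↥(f v) => t x : ↥(f v) → Fin q))
        (proj (f v) S : Set (V → Fin q)) := by
      intro t₁ ht₁ t₂ ht₂ heq
      simp only [Finset.coe_image, proj] at ht₁ ht₂
      obtain ⟨s₁, hs₁, rfl⟩ := ht₁
      obtain ⟨s₂, hs₂, rfl⟩ := ht₂
      funext a
      by_cases ha : a ∈ f v
      · exact congrFun heq ⟨a, ha⟩
      · rw [projFn_mem_of_notMem _ _ ha, projFn_mem_of_notMem _ _ ha]
    -- each projected function restricted to f v is injective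
    have hres : ∀ t ∈ proj (f v) S, Function.Injective
        (fun x : ↥(f v) => t x) := by
      intro t ht
      obtain ⟨s, hs, rfl⟩ := Finset.mem_image.mp ht
      have hsRS : s ∈ RS := (Set.Finite.mem_toFinset hfin).mp hs
      have hsinj : Set.InjOn s (insert v (G.neighborSet v)) := hsRS v
      intro x y hxy
      simp only [projFn_mem_of_mem _ _ x.2, projFn_mem_of_mem _ _ y.2] at hxy
      have hx : (x : V) ∈ insert v (G.neighborSet v) := by
        have := x.2; rw [hmemf] at this
        rcases this with h | h
        · rw [h]; exact Set.mem_insert _ _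
        · exact Set.mem_insert_of_mem _ (by rwa [SimpleGraph.mem_neighborSet])
      have hy : (y : V) ∈ insert v (G.neighborSet v) := by
        have := y.2; rw [hmemf] at this
        rcases this with h | h
        · rw [h]; exact Set.mem_insert _ _
        · exact Set.mem_insert_of_mem _ (by rwa [SimpleGraph.mem_neighborSet])
      exact Subtype.ext (hsinj hx hy hxy)
    -- inject into the type of embeddings
    haveI hne : Nonempty (↥(f v) ↪ Fin q) := by
      apply Function.Embedding.nonempty_of_card_le
      rw [Fintype.card_coe, hfcard v, Fintype.card_fin]
      exact hq
    have hcard : (proj (f v) S).card ≤ Fintype.card (↥(f v) ↪ Fin q) := by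
      rw [← Finset.card_univ]
      apply Finset.card_le_card_of_injOn
        (fun t => if ht : t ∈ proj (f v) S then
          (⟨fun x : ↥(f v) => t x, hres t ht⟩ : ↥(f v) ↪ Fin q) else
          Classical.arbitrary _)
        (fun t _ => Finset.mem_univ _)
      intro t₁ ht₁ t₂ ht₂ heq
      simp only [Finset.mem_coe] at ht₁ ht₂
      dsimp only at heq
      rw [dif_pos ht₁, dif_pos ht₂] at heq
      exact hinj (Finset.mem_coe.mpr ht₁) (Finset.mem_coe.mpr ht₂)
        (funext fun x => congrFun (congrArg Function.Embedding.toFun heq) x)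
    calc (proj (f v) S).card ≤ Fintype.card (↥(f v) ↪ Fin q) := hcard
      _ = q.descFactorial k := by
          rw [Fintype.card_embedding_eq, Fintype.card_fin, Fintype.card_coe, hfcard v]
  -- put everything together
  have hD0 : (0:ℝ) ≤ (q.descFactorial k : ℝ) := Nat.cast_nonneg _
  have hfinal : (S.card : ℝ) ≤ (q.descFactorial k : ℝ) ^ ((Fintype.card V : ℝ) / k) := by
    calc (S.card : ℝ) ≤ ∏ v : V, ((proj (f v) S).card : ℝ) ^ (1/k : ℝ) := hshearer
      _ ≤ ∏ _v : V, (q.descFactorial k : ℝ) ^ (1/k : ℝ) := by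
          apply Finset.prod_le_prod (fun v _ => Real.rpow_nonneg (Nat.cast_nonneg _) _)
          intro v _
          exact Real.rpow_le_rpow (Nat.cast_nonneg _) (by exact_mod_cast hproj v)
            (by positivity)
      _ = ((q.descFactorial k : ℝ) ^ (1/k : ℝ)) ^ (Fintype.card V) := by
          rw [Finset.prod_const, Finset.card_univ]
      _ = (q.descFactorial k : ℝ) ^ ((Fintype.card V : ℝ) / k) := by
          rw [← Real.rpow_natCast ((q.descFactorial k : ℝ) ^ (1/k : ℝ)) (Fintype.card V),
            ← Real.rpow_mul hD0]
          congr 1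
          field_simp
  rw [hncard]
  convert hfinal using 2
  push_cast [hkdef]
  ring
end

section
/- For a graph G with minimum degree at least one, the number of existence homomorphisms from G to H_ind equals the number of dominating sets of G, where H_ind has vertices {0,1}, an edge 01, and a loop at 1. -/
/-- For a graph `G` with minimum degree at least one, the number of existence homomorphisms
from `G` to `H_ind` (vertices `{0,1}`, edge `01`, loop at `1`; encoded here with `Bool`,
where `1` is `true` and a pair is an edge iff at least one endpoint is `true`) equals the
number of dominating sets of `G`. -/
theorem stmt12 {V : Type*} [Fintype V] [DecidableEq V] (G : SimpleGraph V)
    [DecidableRel G.Adj] (hδ : ∀ v : V, 0 < G.degree v) :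
    {φ : V → Bool | ∀ v : V, ∃ w : V, G.Adj v w ∧ (φ v = true ∨ φ w = true)}.ncard =
      {S : Finset V | ∀ v : V, ∃ u ∈ S, u = v ∨ G.Adj u v}.ncard := by
  classical
  have hinj : Function.Injective
      (fun φ : V → Bool => Finset.univ.filter (fun v => φ v = true)) := by
    intro f g h
    funext v
    have := Finset.ext_iff.mp h v
    simp only [Finset.mem_filter, Finset.mem_univ, true_and] at this
    cases hf : f v <;> cases hg : g v <;> simp [hf, hg] at this ⊢
  rw [← Set.ncard_image_of_injective _ hinj]
  congr 1
  ext S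
  simp only [Set.mem_image, Set.mem_setOf_eq]
  constructor
  · rintro ⟨φ, hφ, rfl⟩ v
    by_cases hv : φ v = true
    · exact ⟨v, by simp [hv], Or.inl rfl⟩
    · obtain ⟨w, hw, hor⟩ := hφ v
      rcases hor with h | h
      · exact absurd h hv
      · exact ⟨w, by simp [h], Or.inr hw.symm⟩
  · intro hS
    refine ⟨fun v => decide (v ∈ S), ?_, by ext v; simp⟩
    intro v
    by_cases hv : v ∈ S
    · obtain ⟨w, hw⟩ := (G.degree_pos_iff_exists_adj v).mp (hδ v)
      exact ⟨w, hw, Or.inl (by simp [hv])⟩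
    · obtain ⟨u, huS, hor⟩ := hS v
      rcases hor with rfl | h
      · exact absurd huS hv
      · exact ⟨u, h.symm, Or.inr (by simp [huS])⟩
end

section
/- For any graph G and integer q ≥ 1, the number of existence homomorphisms from G to the complete graph K_q equals the number of proper q-colorings of the closed neighborhood hypergraph 𝓝_c(G). -/
/-- For any graph `G` and integer `q ≥ 1`, the number of existence homomorphisms from `G`
to the complete graph `K_q` equals the number of proper `q`-colorings of the closed
neighborhood hypergraph of `G`. -/
theorem stmt13 {V : Type*} [Fintype V] [DecidableEq V] (G : SimpleGraph V)
    [DecidableRel G.Adj] (q : ℕ) (hq : 1 ≤ q) :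
    {φ : V → Fin q | ∀ v : V, ∃ w : V, G.Adj v w ∧ φ v ≠ φ w}.ncard =
      {φ : V → Fin q | ∀ v : V, ∃ u ∈ insert v (G.neighborFinset v),
        ∃ w ∈ insert v (G.neighborFinset v), φ u ≠ φ w}.ncard := by
  congr 1
  ext φ
  simp only [Set.mem_setOf_eq, Finset.mem_insert, SimpleGraph.mem_neighborFinset]
  constructor
  · intro h v
    obtain ⟨w, hw, hne⟩ := h v
    exact ⟨v, Or.inl rfl, w, Or.inr hw, hne⟩
  · intro h v
    obtain ⟨u, hu, w, hw, hne⟩ := h v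
    by_cases huv : φ u = φ v
    · have hwv : φ v ≠ φ w := huv ▸ hne
      rcases hw with rfl | hw
      · exact absurd rfl hwv
      · exact ⟨w, hw, hwv⟩
    · rcases hu with rfl | hu
      · exact absurd rfl huv
      · exact ⟨u, hu, fun e => huv e.symm⟩
end

section
/- For any integer n ≥ 2, the number of maps φ: V(P_n) → {a,b} such that every vertex has a neighbor of the same color and the left endpoint is colored a equals F_{n-2}, the Fibonacci number (with F_0 = F_1 = 1). -/
/-- Fibonacci numbers with `F 0 = F 1 = 1`. -/
def F : ℕ → ℕ
  | 0 => 1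
  | 1 => 1
  | (n + 2) => F (n + 1) + F n

def good (m : ℕ) (e : Fin (m + 1) → Bool) : Prop :=
  e ⟨0, by omega⟩ = true ∧ e ⟨m, by omega⟩ = true ∧
    ∀ i : ℕ, (h : i < m) → (e ⟨i, by omega⟩ = true ∨ e ⟨i + 1, by omega⟩ = true)

instance (m : ℕ) : DecidablePred (good m) := fun e => by
  unfold good; infer_instance

def N (m : ℕ) : ℕ := (Finset.univ.filter (fun e : Fin (m + 1) → Bool => good m e)).card

lemma Nrec (m : ℕ) : N (m + 2) = N (m + 1) + N m := by
  classical
  unfold N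
  rw [← Finset.card_filter_add_card_filter_not
      (s := Finset.univ.filter (fun e : Fin (m + 3) → Bool => good (m + 2) e))
      (p := fun e => e ⟨m + 1, by omega⟩ = true)]
  congr 1
  · -- drop last entry
    apply Finset.card_nbij' (fun e (j : Fin (m + 2)) => e ⟨j.1, by omega⟩)
      (fun e (j : Fin (m + 3)) => if h : j.1 < m + 2 then e ⟨j.1, h⟩ else true)
    · intro e he
      simp only [Finset.mem_coe, Finset.mem_filter, Finset.mem_univ, true_and] at he ⊢
      obtain ⟨⟨h0, hl, hp⟩, ht⟩ := he
      exact ⟨h0, ht, fun i h => hp i (by omega)⟩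
    · intro e he
      simp only [Finset.mem_coe, Finset.mem_filter, Finset.mem_univ, true_and] at he ⊢
      obtain ⟨h0, hl, hp⟩ := he
      refine ⟨⟨?_, ?_, fun i h => ?_⟩, ?_⟩
      · show (if h : (0:ℕ) < m + 2 then e ⟨0, h⟩ else true) = true
        rw [dif_pos (by omega)]; exact h0
      · show (if h : m + 2 < m + 2 then e ⟨m + 2, h⟩ else true) = true
        rw [dif_neg (by omega)]
      · by_cases hi : i < m + 1
        · rcases hp i hi with h' | h'
          · left
            show (if h : i < m + 2 then e ⟨i, h⟩ else true) = true
            rw [dif_pos (by omega)]; exact h'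
          · right
            show (if h : i + 1 < m + 2 then e ⟨i + 1, h⟩ else true) = true
            rw [dif_pos (by omega)]; exact h'
        · right
          show (if h : i + 1 < m + 2 then e ⟨i + 1, h⟩ else true) = true
          rw [dif_neg (by omega)]
      · show (if h : m + 1 < m + 2 then e ⟨m + 1, h⟩ else true) = true
        rw [dif_pos (by omega)]; exact hl
    · intro e he
      simp only [Finset.mem_coe, Finset.mem_filter, Finset.mem_univ, true_and] at he
      obtain ⟨⟨h0, hl, hp⟩, ht⟩ := he
      funext j
      have hjlt := j.isLt
      show (if h : j.1 < m + 2 then e ⟨j.1, by omega⟩ else true) = e j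
      by_cases h : j.1 < m + 2
      · rw [dif_pos h]
      · rw [dif_neg h]
        have hj : j = ⟨m + 2, by omega⟩ := Fin.ext (show j.1 = m + 2 by omega)
        have h1 : e j = true := by rw [hj]; exact hl
        rw [h1]
    · intro e he
      funext j
      show (if h : j.1 < m + 2 then e ⟨j.1, h⟩ else true) = e j
      rw [dif_pos j.isLt]
  · -- drop last two entries
    apply Finset.card_nbij' (fun e (j : Fin (m + 1)) => e ⟨j.1, by omega⟩)
      (fun e (j : Fin (m + 3)) =>
        if h : j.1 < m + 1 then e ⟨j.1, h⟩ else decide (j.1 = m + 2))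
    · intro e he
      simp only [Finset.mem_coe, Finset.mem_filter, Finset.mem_univ, true_and, Bool.not_eq_true] at he ⊢
      obtain ⟨⟨h0, hl, hp⟩, ht⟩ := he
      refine ⟨h0, ?_, fun i h => hp i (by omega)⟩
      rcases hp m (by omega) with h' | h'
      · exact h'
      · have h'' : e ⟨m + 1, by omega⟩ = true := h'
        rw [ht] at h''
        exact absurd h'' (by simp)
    · intro e he
      simp only [Finset.mem_coe, Finset.mem_filter, Finset.mem_univ, true_and, Bool.not_eq_true] at he ⊢
      obtain ⟨h0, hl, hp⟩ := he
      refine ⟨⟨?_, ?_, fun i h => ?_⟩, ?_⟩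
      · show (if h : (0:ℕ) < m + 1 then e ⟨0, h⟩ else decide ((0:ℕ) = m + 2)) = true
        rw [dif_pos (by omega)]; exact h0
      · show (if h : m + 2 < m + 1 then e ⟨m + 2, h⟩ else decide (m + 2 = m + 2)) = true
        rw [dif_neg (by omega)]; exact decide_eq_true rfl
      · by_cases hi : i < m
        · rcases hp i hi with h' | h'
          · left
            show (if h : i < m + 1 then e ⟨i, h⟩ else decide (i = m + 2)) = true
            rw [dif_pos (by omega)]; exact h'
          · right
            show (if h : i + 1 < m + 1 then e ⟨i + 1, h⟩ else decide (i + 1 = m + 2)) = true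
            rw [dif_pos (by omega)]; exact h'
        · rcases Nat.lt_or_ge i (m + 1) with hi' | hi'
          · left
            show (if h : i < m + 1 then e ⟨i, h⟩ else decide (i = m + 2)) = true
            rw [dif_pos (by omega)]
            have : (⟨i, by omega⟩ : Fin (m + 1)) = ⟨m, by omega⟩ :=
              Fin.ext (show i = m by omega)
            rw [this]; exact hl
          · right
            show (if h : i + 1 < m + 1 then e ⟨i + 1, h⟩ else decide (i + 1 = m + 2)) = true
            rw [dif_neg (by omega)]
            exact decide_eq_true (by omega)
      · show (if h : m + 1 < m + 1 then e ⟨m + 1, h⟩ else decide (m + 1 = m + 2)) = false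
        rw [dif_neg (by omega)]
        exact decide_eq_false (by omega)
    · intro e he
      simp only [Finset.mem_coe, Finset.mem_filter, Finset.mem_univ, true_and, Bool.not_eq_true] at he
      obtain ⟨⟨h0, hl, hp⟩, ht⟩ := he
      funext j
      have hjlt := j.isLt
      show (if h : j.1 < m + 1 then e ⟨j.1, by omega⟩ else decide (j.1 = m + 2)) = e j
      by_cases h : j.1 < m + 1
      · rw [dif_pos h]
      · rw [dif_neg h]
        rcases Nat.lt_or_ge j.1 (m + 2) with h' | h'
        · have hj : j = ⟨m + 1, by omega⟩ := Fin.ext (show j.1 = m + 1 by omega)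
          have h1 : e j = false := by rw [hj]; exact ht
          rw [h1]
          exact decide_eq_false (by omega)
        · have hj : j = ⟨m + 2, by omega⟩ := Fin.ext (show j.1 = m + 2 by omega)
          have h1 : e j = true := by rw [hj]; exact hl
          rw [h1]
          exact decide_eq_true (by omega)
    · intro e he
      funext j
      show (if h : j.1 < m + 1 then e ⟨j.1, h⟩ else decide (j.1 = m + 2)) = e j
      rw [dif_pos j.isLt]

lemma N0 : N 0 = 1 := by decide

lemma N1 : N 1 = 1 := by decide

lemma N_eq : ∀ m, N m = F m
  | 0 => N0
  | 1 => N1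
  | (m + 2) => by rw [Nrec, N_eq (m + 1), N_eq m, F]

def cum (e : ℕ → Bool) : ℕ → Bool
  | 0 => true
  | j + 1 => (cum e j == e j)

lemma cum_step (E : ℕ → Bool) (j : ℕ) (h : E j = true) : cum E (j + 1) = cum E j := by
  show (cum E j == E j) = cum E j
  rw [h]; cases cum E j <;> rfl

lemma boolkey (a b : Bool) : (a == (a == b)) = b := by revert a b; decide

def toE (k : ℕ) (φ : Fin (k + 2) → Bool) : Fin (k + 1) → Bool :=
  fun i => φ ⟨i.1, by omega⟩ == φ ⟨i.1 + 1, by omega⟩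

def Ex (k : ℕ) (e : Fin (k + 1) → Bool) : ℕ → Bool :=
  fun i => if h : i < k + 1 then e ⟨i, h⟩ else true

def fromE (k : ℕ) (e : Fin (k + 1) → Bool) : Fin (k + 2) → Bool :=
  fun j => cum (Ex k e) j.1

theorem main (k : ℕ) (P : (Fin (k + 2) → Bool) → Prop) [DecidablePred P]
    (hP : ∀ φ, P φ ↔ ((∀ v : Fin (k + 2), ∃ w : Fin (k + 2),
        (SimpleGraph.pathGraph (k + 2)).Adj v w ∧ φ v = φ w) ∧
      φ ⟨0, by omega⟩ = true)) :
    (Finset.univ.filter P).card = N k := by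
  classical
  unfold N
  apply Finset.card_nbij' (toE k) (fromE k)
  · -- validity → good
    intro φ hφ
    simp only [Finset.mem_coe, Finset.mem_filter, Finset.mem_univ, true_and] at hφ ⊢
    rw [hP] at hφ
    obtain ⟨hadj, h0⟩ := hφ
    refine ⟨?_, ?_, fun i h => ?_⟩
    · -- first
      obtain ⟨w, hw, heq⟩ := hadj ⟨0, by omega⟩
      rw [SimpleGraph.pathGraph_adj] at hw
      simp only [Fin.val_mk] at hw
      have hwk : φ w = φ ⟨1, by omega⟩ :=
        congrArg φ (Fin.ext (show w.1 = 1 by omega))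
      show (φ ⟨0, by omega⟩ == φ ⟨1, by omega⟩) = true
      simp only [beq_iff_eq]
      exact heq.trans hwk
    · -- last
      obtain ⟨w, hw, heq⟩ := hadj ⟨k + 1, by omega⟩
      rw [SimpleGraph.pathGraph_adj] at hw
      simp only [Fin.val_mk] at hw
      have hwlt := w.isLt
      have hwk : φ w = φ ⟨k, by omega⟩ :=
        congrArg φ (Fin.ext (show w.1 = k by omega))
      show (φ ⟨k, by omega⟩ == φ ⟨k + 1, by omega⟩) = true
      simp only [beq_iff_eq]
      exact (heq.trans hwk).symm
    · -- middle vertex i+1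
      obtain ⟨w, hw, heq⟩ := hadj ⟨i + 1, by omega⟩
      rw [SimpleGraph.pathGraph_adj] at hw
      simp only [Fin.val_mk] at hw
      rcases hw with hw | hw
      · -- w = i + 2
        right
        have hwk : φ w = φ ⟨i + 2, by omega⟩ :=
          congrArg φ (Fin.ext (show w.1 = i + 2 by omega))
        show (φ ⟨i + 1, by omega⟩ == φ ⟨i + 2, by omega⟩) = true
        simp only [beq_iff_eq]
        exact heq.trans hwk
      · -- w = i
        left
        have hwk : φ w = φ ⟨i, by omega⟩ :=
          congrArg φ (Fin.ext (show w.1 = i by omega))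
        show (φ ⟨i, by omega⟩ == φ ⟨i + 1, by omega⟩) = true
        simp only [beq_iff_eq]
        exact (heq.trans hwk).symm
  · -- good → validity
    intro e he
    simp only [Finset.mem_coe, Finset.mem_filter, Finset.mem_univ, true_and] at he ⊢
    rw [hP]
    obtain ⟨h0, hl, hp⟩ := he
    have hE : ∀ i (h : i < k + 1), Ex k e i = e ⟨i, h⟩ := fun i h => dif_pos h
    constructor
    · intro v
      have hvlt := v.isLt
      by_cases hv0 : v.1 = 0
      · refine ⟨⟨1, by omega⟩, ?_, ?_⟩
        · rw [SimpleGraph.pathGraph_adj]; left; simp [hv0]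
        · show cum (Ex k e) v.1 = cum (Ex k e) 1
          rw [hv0]
          refine (cum_step _ 0 ?_).symm
          rw [hE 0 (by omega)]
          exact h0
      · by_cases hvl : v.1 = k + 1
        · refine ⟨⟨k, by omega⟩, ?_, ?_⟩
          · rw [SimpleGraph.pathGraph_adj]; right; simp [hvl]
          · show cum (Ex k e) v.1 = cum (Ex k e) k
            rw [hvl]
            refine cum_step _ k ?_
            rw [hE k (by omega)]
            exact hl
        · obtain ⟨i, hi⟩ : ∃ i, v.1 = i + 1 := ⟨v.1 - 1, by omega⟩
          have hik : i < k := by omega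
          rcases hp i hik with h' | h'
          · refine ⟨⟨i, by omega⟩, ?_, ?_⟩
            · rw [SimpleGraph.pathGraph_adj]; right; simp; omega
            · show cum (Ex k e) v.1 = cum (Ex k e) i
              rw [hi]
              refine cum_step _ i ?_
              rw [hE i (by omega)]
              exact h'
          · refine ⟨⟨i + 2, by omega⟩, ?_, ?_⟩
            · rw [SimpleGraph.pathGraph_adj]; left; simp; omega
            · show cum (Ex k e) v.1 = cum (Ex k e) (i + 2)
              rw [hi]
              refine (cum_step _ (i + 1) ?_).symm
              rw [hE (i + 1) (by omega)]
              exact h'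
    · rfl
  · -- left inverse
    intro φ hφ
    simp only [Finset.mem_coe, Finset.mem_filter, Finset.mem_univ, true_and] at hφ
    rw [hP] at hφ
    obtain ⟨hadj, h0⟩ := hφ
    have claim : ∀ jv (hj : jv < k + 2), cum (Ex k (toE k φ)) jv = φ ⟨jv, hj⟩ := by
      intro jv
      induction jv with
      | zero => intro hj; exact h0.symm
      | succ jv ih =>
        intro hj
        show (cum (Ex k (toE k φ)) jv == Ex k (toE k φ) jv) = φ ⟨jv + 1, hj⟩
        rw [ih (by omega)]
        have hEx : Ex k (toE k φ) jv = (φ ⟨jv, by omega⟩ == φ ⟨jv + 1, by omega⟩) := by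
          unfold Ex toE
          rw [dif_pos (show jv < k + 1 by omega)]
        rw [hEx]
        exact boolkey _ _
    funext j
    show cum (Ex k (toE k φ)) j.1 = φ j
    rw [claim j.1 j.isLt]
  · -- right inverse
    intro e he
    funext i
    show (fromE k e ⟨i.1, by omega⟩ == fromE k e ⟨i.1 + 1, by omega⟩) = e i
    show (cum (Ex k e) i.1 == cum (Ex k e) (i.1 + 1)) = e i
    show (cum (Ex k e) i.1 == (cum (Ex k e) i.1 == Ex k e i.1)) = e i
    rw [boolkey]
    show (if h : i.1 < k + 1 then e ⟨i.1, h⟩ else true) = e i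
    rw [dif_pos i.isLt]

/-- For `n ≥ 2`, the number of two-colorings of the path `P_n` in which every vertex has a
neighbor of the same color and the left endpoint gets a specified color is `F (n-2)`. -/
theorem stmt14 (n : ℕ) (hn : 2 ≤ n) :
    {φ : Fin n → Bool | (∀ v : Fin n, ∃ w : Fin n,
        (SimpleGraph.pathGraph n).Adj v w ∧ φ v = φ w) ∧
      φ ⟨0, by omega⟩ = true}.ncard = F (n - 2) := by
  classical
  obtain ⟨k, rfl⟩ : ∃ k, n = k + 2 := ⟨n - 2, by omega⟩
  have hset : {φ : Fin (k + 2) → Bool | (∀ v : Fin (k + 2), ∃ w : Fin (k + 2),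
        (SimpleGraph.pathGraph (k + 2)).Adj v w ∧ φ v = φ w) ∧
      φ ⟨0, by omega⟩ = true} =
      ↑(Finset.univ.filter (fun φ : Fin (k + 2) → Bool =>
        (∀ v : Fin (k + 2), ∃ w : Fin (k + 2),
          (SimpleGraph.pathGraph (k + 2)).Adj v w ∧ φ v = φ w) ∧
        φ ⟨0, by omega⟩ = true)) := by
    ext φ
    simp only [Set.mem_setOf_eq, Finset.coe_filter, Finset.mem_univ, true_and]
  rw [hset, Set.ncard_coe_finset, main k _ (fun φ => Iff.rfl), N_eq]
  norm_num
end

section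
/- For the counts c_n of 2-colorings of the cycle C_n (n ≥ 3) in which every vertex has a neighbor of the same color, the sequence c_n^(1/n) attains its maximum at n = 6. -/
/-- `c n` is the number of two-colorings of the cycle `C_n` in which every vertex has a
neighbor of the same color. -/
noncomputable def c (n : ℕ) : ℕ :=
  {φ : Fin n → Bool | ∀ v, ∃ w, (SimpleGraph.cycleGraph n).Adj v w ∧ φ v = φ w}.ncard

namespace Cyc

abbrev S := Bool × Bool
def allowedb (p q : S) : Bool := q.1 == p.2 && (p.1 == p.2 || q.2 == p.2)
def g : ℕ → S → S → ℕ
  | 0, a, b => if a = b then 1 else 0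
  | n+1, a, b => ∑ x : S, if allowedb a x then g n x b else 0
def t (n : ℕ) : ℕ := ∑ a : S, g n a a
abbrev Ok (n : ℕ) (f : Fin (n+1) → S) : Prop :=
  ∀ i : Fin n, allowedb (f i.castSucc) (f i.succ) = true
abbrev P (n : ℕ) (a b : S) : Type :=
  {f : Fin (n+1) → S // f 0 = a ∧ f (Fin.last n) = b ∧ Ok n f}
abbrev CW (n : ℕ) : Type := {f : Fin (n+1) → S // f (Fin.last n) = f 0 ∧ Ok n f}
abbrev V' (m : ℕ) : Type := {φ : Fin (m+3) → Bool // ∀ v, φ v = φ (v+1) ∨ φ v = φ (v-1)}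

lemma grec : ∀ n a b, g (n+4) a b + g (n+2) a b = 2 * g (n+3) a b + g n a b := by
  intro n
  induction n with
  | zero => decide
  | succ n ih =>
    intro a b
    show g (n+4+1) a b + g (n+2+1) a b = 2 * g (n+3+1) a b + g (n+1) a b
    simp only [g, ← Finset.sum_add_distrib, Finset.mul_sum]
    apply Finset.sum_congr rfl
    intro x _
    by_cases h : allowedb a x
    · simp only [h, if_true]; exact ih x b
    · simp [h]

lemma trec (n : ℕ) : t (n+4) + t (n+2) = 2 * t (n+3) + t n := by
  simp only [t, ← Finset.sum_add_distrib, Finset.mul_sum]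
  exact Finset.sum_congr rfl fun a _ => grec n a a

lemma t3 : t 3 = 2 := by decide
lemma t4 : t 4 = 6 := by decide
lemma t5 : t 5 = 12 := by decide
lemma t6 : t 6 = 20 := by decide
lemma t7 : t 7 = 30 := by have := trec 3; norm_num [t3, t4, t5, t6] at this; omega
lemma t8 : t 8 = 46 := by have := trec 4; norm_num [t4, t5, t6, t7] at this; omega
lemma t9 : t 9 = 74 := by have := trec 5; norm_num [t5, t6, t7, t8] at this; omega
lemma t10 : t 10 = 122 := by have := trec 6; norm_num [t6, t7, t8, t9] at this; omega

def vz (n : ℕ) : ℤ := (t (n+2) : ℤ) - t (n+1) - t n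

lemma vzrec (n : ℕ) : vz (n+2) = vz (n+1) - vz n := by
  have h := trec n
  simp only [vz]
  push_cast
  have : (t (n+4) : ℤ) + t (n+2) = 2 * t (n+3) + t n := by exact_mod_cast h
  linarith

lemma vzper (n : ℕ) : vz (n+6) = vz n := by
  have h0 := vzrec n
  have h1 := vzrec (n+1)
  have h2 := vzrec (n+2)
  have h3 := vzrec (n+3)
  have h4 := vzrec (n+4)
  have e0 : n+1+2 = n+3 := by ring
  have e1 : n+1+1 = n+2 := by ring
  have e2 : n+2+2 = n+4 := by ring
  have e3 : n+2+1 = n+3 := by ring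
  have e4 : n+3+2 = n+5 := by ring
  have e5 : n+3+1 = n+4 := by ring
  have e6 : n+4+2 = n+6 := by ring
  have e7 : n+4+1 = n+5 := by ring
  rw [e0,e1] at h1; rw [e2,e3] at h2; rw [e4,e5] at h3; rw [e6,e7] at h4
  linarith

lemma vzbound : ∀ n, 3 ≤ n → vz n ≤ 4 := by
  intro n
  induction n using Nat.strong_induction_on with
  | _ n ih =>
    intro hn
    rcases Nat.lt_or_ge n 9 with h | h
    · interval_cases n <;>
        simp [vz, t3, t4, t5, t6, t7, t8, t9, t10] <;> norm_num
    · have : n - 6 + 6 = n := by omega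
      rw [← this, vzper]
      exact ih (n-6) (by omega) (by omega)

lemma tineq (n : ℕ) (hn : 3 ≤ n) : (t (n+2) : ℤ) ≤ t (n+1) + t n + 4 := by
  have := vzbound n hn
  simp only [vz] at this
  linarith

noncomputable def ρ : ℝ := (20 : ℝ) ^ ((1:ℝ)/6)

lemma ρpos : 0 < ρ := Real.rpow_pos_of_pos (by norm_num) _

lemma ρ6 : ρ ^ 6 = 20 := by
  rw [ρ, ← Real.rpow_natCast ((20:ℝ) ^ ((1:ℝ)/6)) 6, ← Real.rpow_mul (by norm_num)]
  norm_num

lemma ρge : (1.647 : ℝ) ≤ ρ := by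
  by_contra h
  push_neg at h
  have h2 : ρ ^ 6 ≤ (1.647:ℝ) ^ 6 := pow_le_pow_left₀ ρpos.le h.le 6
  rw [ρ6] at h2
  norm_num at h2

lemma ρfib : ρ + 1 ≤ ρ ^ 2 := by
  have := ρge
  nlinarith

lemma ρ9 : (78 : ℝ) ≤ ρ ^ 9 := by
  have h : (ρ ^ 9) ^ 2 = 8000 := by
    rw [← pow_mul]
    have : ρ ^ 18 = (ρ^6)^3 := by ring
    rw [this, ρ6]; norm_num
  nlinarith [pow_pos ρpos 9]

lemma ρ10 : (126 : ℝ) ≤ ρ ^ 10 := by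
  have h : (ρ ^ 10) ^ 3 = 3200000 := by
    have : (ρ^10)^3 = (ρ^6)^5 := by ring
    rw [this, ρ6]; norm_num
  nlinarith [pow_pos ρpos 10, sq_nonneg (ρ^10 - 126), sq_nonneg (ρ^10 + 126)]

lemma tineqR (n : ℕ) (hn : 3 ≤ n) : (t (n+2) : ℝ) ≤ t (n+1) + t n + 4 := by
  exact_mod_cast tineq n hn

lemma main : ∀ n, 9 ≤ n → (t n : ℝ) ≤ ρ ^ n - 4 := by
  intro n
  induction n using Nat.strong_induction_on with
  | _ n ih =>
    intro hn
    rcases Nat.lt_or_ge n 11 with h | h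
    · interval_cases n
      · rw [t9]; have := ρ9; norm_num; linarith
      · rw [t10]; have := ρ10; norm_num; linarith
    · have e : n - 2 + 2 = n := by omega
      have h1 := ih (n-1) (by omega) (by omega)
      have h2 := ih (n-2) (by omega) (by omega)
      have h3 := tineqR (n-2) (by omega)
      rw [e] at h3
      have e1 : n - 2 + 1 = n - 1 := by omega
      rw [e1] at h3
      have hgeom : ρ ^ (n-1) + ρ ^ (n-2) ≤ ρ ^ n := by
        obtain ⟨m, rfl⟩ : ∃ m, n = m + 2 := ⟨n - 2, by omega⟩
        have e2 : m + 2 - 1 = m + 1 := by omega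
        have e3 : m + 2 - 2 = m := by omega
        rw [e2, e3, pow_succ, show m + 2 = m + 2 from rfl, pow_add]
        have hp : (0:ℝ) < ρ ^ m := pow_pos ρpos _
        nlinarith [ρfib]
      linarith

lemma tval (n : ℕ) (hn : 3 ≤ n) : (t n : ℝ) ≤ ρ ^ n := by
  rcases Nat.lt_or_ge n 9 with h | h
  · have hr := ρge
    have hrp : (0:ℝ) ≤ 1.647 := by norm_num
    have hp : ∀ k : ℕ, (1.647:ℝ) ^ k ≤ ρ ^ k := fun k => pow_le_pow_left₀ hrp hr k
    interval_cases n
    · rw [t3]; push_cast; nlinarith [hp 3]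
    · rw [t4]; push_cast; nlinarith [hp 4]
    · rw [t5]; push_cast; nlinarith [hp 5]
    · rw [t6, ρ6]; push_cast; exact le_refl _
    · rw [t7]; push_cast
      have : ρ ^ 7 = ρ ^ 6 * ρ := by ring
      rw [this, ρ6]; nlinarith
    · rw [t8]; push_cast
      have : ρ ^ 8 = ρ ^ 6 * ρ ^ 2 := by ring
      rw [this, ρ6]; nlinarith
  · have := main n h
    have : (t n : ℝ) ≤ ρ ^ n - 4 := this
    linarith

def fiberEquiv (n : ℕ) (a b c : S) (hc : allowedb a c = true) :
    {q : P (n+1) a b // Fin.tail q.1 0 = c} ≃ P n c b where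
  toFun p := ⟨Fin.tail p.1.1, p.2, by
      show p.1.1 ((Fin.last n).succ) = b
      rw [Fin.succ_last]; exact p.1.2.2.1,
    fun i => by
      have h := p.1.2.2.2 i.succ
      rwa [← Fin.succ_castSucc] at h⟩
  invFun q := ⟨⟨Fin.cons a q.1, rfl, by
      rw [← Fin.succ_last, Fin.cons_succ]; exact q.2.2.1,
    fun i => by
      induction i using Fin.cases with
      | zero =>
        rw [Fin.castSucc_zero, Fin.cons_zero, Fin.cons_succ, q.2.1]
        exact hc
      | succ j =>
        rw [← Fin.succ_castSucc, Fin.cons_succ, Fin.cons_succ]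
        exact q.2.2.2 j⟩,
    by rw [Fin.tail_cons]; exact q.2.1⟩
  left_inv p := by
    apply Subtype.ext; apply Subtype.ext
    have h := Fin.cons_self_tail (α := fun _ => S) p.1.1
    rw [p.1.2.1] at h
    exact h
  right_inv q := by
    apply Subtype.ext
    exact Fin.tail_cons (α := fun _ => S) a q.1

lemma card_P (n : ℕ) : ∀ a b, Fintype.card (P n a b) = g n a b := by
  induction n with
  | zero => decide
  | succ n ih =>
    intro a b
    have hsum : Fintype.card (P (n+1) a b)
        = ∑ c : S, Fintype.card {q : P (n+1) a b // Fin.tail q.1 0 = c} := by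
      rw [Fintype.card_eq_sum_ones,
        ← Fintype.sum_fiberwise (fun q : P (n+1) a b => Fin.tail q.1 0) (fun _ => (1:ℕ))]
      apply Finset.sum_congr rfl
      intro c _
      rw [Fintype.card_eq_sum_ones]
    rw [hsum]
    show _ = g (n+1) a b
    simp only [g]
    apply Finset.sum_congr rfl
    intro c _
    by_cases hc : allowedb a c = true
    · rw [if_pos hc, Fintype.card_congr (fiberEquiv n a b c hc), ih]
    · rw [if_neg hc]
      rw [Fintype.card_eq_zero_iff]
      constructor
      intro q
      apply hc
      have h := q.1.2.2.2 0
      rw [Fin.castSucc_zero, q.1.2.1] at h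
      rw [← q.2] at hc
      exact absurd h hc

def emc (m : ℕ) (i : Fin (m+4)) : Fin (m+3) :=
  if h : (i : ℕ) < m+3 then ⟨i, h⟩ else 0

lemma em_castSucc (m : ℕ) (j : Fin (m+3)) : emc m j.castSucc = j := by
  simp [emc, j.isLt]

lemma em_zero (m : ℕ) : emc m 0 = 0 := rfl

lemma em_last (m : ℕ) : emc m (Fin.last (m+3)) = 0 := by
  simp [emc]

lemma val_add_one (m : ℕ) (j : Fin (m+3)) : ((j + 1 : Fin (m+3)) : ℕ) = (j.val + 1) % (m+3) := by
  rw [Fin.add_def]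
  congr 1

lemma em_succ (m : ℕ) (j : Fin (m+3)) : emc m j.succ = j + 1 := by
  have hlt := j.isLt
  apply Fin.ext
  rw [val_add_one]
  simp only [emc, Fin.val_succ]
  split
  · next h => exact (Nat.mod_eq_of_lt h).symm
  · next h =>
      have hj : j.val + 1 = m + 3 := by omega
      simp [hj]

/-- The walk associated to a coloring. -/
def toW (m : ℕ) (φ : Fin (m+3) → Bool) : Fin (m+4) → S :=
  fun i => (φ (emc m i), φ (emc m i + 1))

lemma toW_closed (m : ℕ) (φ : Fin (m+3) → Bool) :
    toW m φ (Fin.last (m+3)) = toW m φ 0 := by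
  simp [toW, em_last, em_zero]

lemma toW_castSucc (m : ℕ) (φ : Fin (m+3) → Bool) (j : Fin (m+3)) :
    toW m φ j.castSucc = (φ j, φ (j+1)) := by
  simp [toW, em_castSucc]

lemma toW_succ (m : ℕ) (φ : Fin (m+3) → Bool) (j : Fin (m+3)) :
    toW m φ j.succ = (φ (j+1), φ (j+1+1)) := by
  simp [toW, em_succ]

lemma toW_ok (m : ℕ) (φ : Fin (m+3) → Bool)
    (hφ : ∀ v, φ v = φ (v+1) ∨ φ v = φ (v-1)) : Ok (m+3) (toW m φ) := by
  intro j
  rw [toW_castSucc, toW_succ]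
  have hv := hφ (j + 1)
  have e : j + 1 - 1 = j := by abel
  rw [e] at hv
  simp only [allowedb, Bool.and_eq_true, beq_iff_eq, Bool.or_eq_true]
  refine ⟨trivial, ?_⟩
  rcases hv with h | h
  · right; exact h.symm
  · left; exact h.symm

lemma Fsucc (m : ℕ) (F : Fin (m+4) → S) (hcl : F (Fin.last (m+3)) = F 0)
    (j : Fin (m+3)) : F j.succ = F ((j+1).castSucc) := by
  rcases Nat.lt_or_ge (j.val + 1) (m+3) with h | h
  · congr 1
    apply Fin.ext
    rw [Fin.coe_castSucc, val_add_one, Fin.val_succ, Nat.mod_eq_of_lt h]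
  · have hj : j.val + 1 = m + 3 := by omega
    have h1 : j.succ = Fin.last (m+3) := by
      apply Fin.ext; simp [hj]
    have h2 : j + 1 = (0 : Fin (m+3)) := by
      apply Fin.ext; rw [val_add_one]; simp [hj]
    rw [h1, h2, hcl]
    rfl

lemma okG (m : ℕ) (F : CW (m+3)) (j : Fin (m+3)) :
    allowedb (F.1 j.castSucc) (F.1 ((j+1).castSucc)) = true := by
  have := F.2.2 j
  rwa [Fsucc m F.1 F.2.1 j] at this

lemma Gsnd (m : ℕ) (F : CW (m+3)) (j : Fin (m+3)) :
    (F.1 j.castSucc).2 = (F.1 ((j+1).castSucc)).1 := by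
  have h := okG m F j
  simp only [allowedb, Bool.and_eq_true, beq_iff_eq] at h
  exact h.1.symm

lemma fromW_valid (m : ℕ) (F : CW (m+3)) :
    ∀ v : Fin (m+3), (F.1 v.castSucc).1 = (F.1 ((v+1).castSucc)).1
       ∨ (F.1 v.castSucc).1 = (F.1 ((v-1).castSucc)).1 := by
  intro v
  have h := okG m F (v-1)
  have e : v - 1 + 1 = v := by abel
  rw [e] at h
  simp only [allowedb, Bool.and_eq_true, beq_iff_eq, Bool.or_eq_true] at h
  have hs1 : (F.1 (v-1).castSucc).2 = (F.1 v.castSucc).1 := by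
    have := Gsnd m F (v-1); rwa [e] at this
  have hs2 : (F.1 v.castSucc).2 = (F.1 ((v+1).castSucc)).1 := Gsnd m F v
  rcases h.2 with h' | h'
  · right; rw [← hs1, h']
  · left; rw [← hs2, h', hs1]

def colEquiv (m : ℕ) : V' m ≃ CW (m+3) where
  toFun φ := ⟨toW m φ.1, toW_closed m φ.1, toW_ok m φ.1 φ.2⟩
  invFun F := ⟨fun v => (F.1 v.castSucc).1, fromW_valid m F⟩
  left_inv φ := by
    apply Subtype.ext
    funext v
    show (toW m φ.1 v.castSucc).1 = φ.1 v
    rw [toW_castSucc]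
  right_inv F := by
    apply Subtype.ext
    funext i
    show toW m (fun v => (F.1 v.castSucc).1) i = F.1 i
    have hGform : ∀ j : Fin (m+3), F.1 j.castSucc
        = ((F.1 j.castSucc).1, (F.1 ((j+1).castSucc)).1) := by
      intro j
      have := Gsnd m F j
      exact Prod.ext rfl this
    rcases Nat.lt_or_ge (i.val) (m+3) with h | h
    · have e : (emc m i).castSucc = i := by
        apply Fin.ext
        simp [emc, h]
      show ((F.1 (emc m i).castSucc).1, (F.1 (emc m i + 1).castSucc).1) = F.1 i
      rw [← hGform (emc m i), e]
    · have hi : i = Fin.last (m+3) := by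
        apply Fin.ext
        have := i.isLt; simp; omega
      have e0 : (emc m i) = 0 := by rw [hi]; exact em_last m
      show (_, _) = F.1 i
      rw [e0, hi, F.2.1]
      have : F.1 0 = F.1 ((0 : Fin (m+3)).castSucc) := rfl
      rw [this, ← hGform 0]

def cwFiberEquiv (n : ℕ) (a : S) : {q : CW n // q.1 0 = a} ≃ P n a a where
  toFun p := ⟨p.1.1, p.2, p.1.2.1.trans p.2, p.1.2.2⟩
  invFun q := ⟨⟨q.1, q.2.2.1.trans q.2.1.symm, q.2.2.2⟩, q.2.1⟩
  left_inv p := by apply Subtype.ext; apply Subtype.ext; rfl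
  right_inv q := by apply Subtype.ext; rfl

lemma card_CW (n : ℕ) : Fintype.card (CW n) = t n := by
  rw [Fintype.card_eq_sum_ones, ← Fintype.sum_fiberwise (fun q : CW n => q.1 0) (fun _ => (1:ℕ))]
  rw [t]
  apply Finset.sum_congr rfl
  intro a _
  rw [← Fintype.card_eq_sum_ones, Fintype.card_congr (cwFiberEquiv n a), card_P]


lemma valid_iff (m : ℕ) (φ : Fin (m+3) → Bool) :
    (∀ v, ∃ w, (SimpleGraph.cycleGraph (m+3)).Adj v w ∧ φ v = φ w) ↔
    (∀ v, φ v = φ (v+1) ∨ φ v = φ (v-1)) := by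
  constructor
  · intro h v
    obtain ⟨w, hadj, heq⟩ := h v
    rw [SimpleGraph.cycleGraph_adj'] at hadj
    rcases hadj with h1 | h1
    · have hw : v - w = 1 := by apply Fin.ext; rw [h1]; exact (Fin.val_one _).symm
      have : w = v - 1 := by rw [← hw]; abel
      right; rw [← this]; exact heq
    · have hw : w - v = 1 := by apply Fin.ext; rw [h1]; exact (Fin.val_one _).symm
      have : w = v + 1 := by rw [← hw]; abel
      left; rw [← this]; exact heq
  · intro h v
    rcases h v with h1 | h1
    · refine ⟨v + 1, ?_, h1⟩
      rw [SimpleGraph.cycleGraph_adj']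
      right
      have : v + 1 - v = 1 := by abel
      rw [this]; exact Fin.val_one _
    · refine ⟨v - 1, ?_, h1⟩
      rw [SimpleGraph.cycleGraph_adj']
      left
      have : v - (v - 1) = 1 := by abel
      rw [this]; exact Fin.val_one _

def vEquiv (m : ℕ) :
    {φ : Fin (m+3) → Bool // ∀ v, ∃ w, (SimpleGraph.cycleGraph (m+3)).Adj v w ∧ φ v = φ w}
    ≃ V' m :=
  Equiv.subtypeEquivRight (fun φ => valid_iff m φ)

lemma c_eq_t (m : ℕ) : c (m+3) = t (m+3) := by
  have h1 : c (m+3) = Fintype.card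
      {φ : Fin (m+3) → Bool // ∀ v, ∃ w, (SimpleGraph.cycleGraph (m+3)).Adj v w ∧ φ v = φ w} := by
    rw [c, Set.ncard_eq_toFinset_card', Set.toFinset_card]
    rfl
  rw [h1, Fintype.card_congr ((vEquiv m).trans (colEquiv m)), card_CW]

lemma c_le (n : ℕ) (hn : 3 ≤ n) : (c n : ℝ) ≤ ρ ^ n := by
  obtain ⟨m, rfl⟩ : ∃ m, n = m + 3 := ⟨n - 3, by omega⟩
  rw [c_eq_t]
  exact tval (m+3) (by omega)

lemma c6 : c 6 = 20 := by
  have := c_eq_t 3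
  rw [this, t6]

end Cyc

/-- The sequence `c_n^(1/n)` (for `n ≥ 3`) attains its maximum at `n = 6`. -/
theorem stmt18 (n : ℕ) (hn : 3 ≤ n) :
    (c n : ℝ) ^ ((1 : ℝ) / n) ≤ (c 6 : ℝ) ^ ((1 : ℝ) / 6) := by
  have hn0 : (n : ℝ) ≠ 0 := Nat.cast_ne_zero.mpr (by omega)
  have h1 := Cyc.c_le n hn
  have h2 : (c n : ℝ) ^ ((1:ℝ)/n) ≤ (Cyc.ρ ^ n) ^ ((1:ℝ)/n) :=
    Real.rpow_le_rpow (Nat.cast_nonneg _) h1 (by positivity)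
  have h3 : (Cyc.ρ ^ n : ℝ) ^ ((1:ℝ)/n) = Cyc.ρ := by
    rw [← Real.rpow_natCast Cyc.ρ n, ← Real.rpow_mul Cyc.ρpos.le,
      mul_one_div, div_self hn0, Real.rpow_one]
  have h4 : ((c 6 : ℕ) : ℝ) ^ ((1:ℝ)/6) = Cyc.ρ := by
    rw [Cyc.c6, Cyc.ρ]; norm_num
  rw [h4, ← h3]
  exact h2
end
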